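/- Let Ω be a finite probability space, M ≥ 3, and X_1, …, X_M random variables taking values in finite types, with the joint probability strictly positive on the full product of value types. Let Θ : {2, …, M−1} → {1, …, M−1} be a parent assignment and let p₁, p₂ ∈ {1, …, M−1} be two distinct parents for node M. Define q(x) = P(X_1 = x_1) · ∏_{i=2}^{M−1} P(X_i = x_i ∣ X_{Θ(i)} = x_{Θ(i)}) · P(X_M = x_M ∣ X_{p₁} = x_{p₁}, X_{p₂} = x_{p₂}). Then the Kullback–Leibler divergence satisfies Σ_x P(X = x) log( P(X = x)/q(x) ) = Σ_{i=1}^{M} H(X_i) − H(X_1, …, X_M) − Σ_{i=2}^{M−1} I(X_i ; X_{Θ(i)}) − I(X_M ; (X_{p₁}, X_{p₂})). -/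

import Mathlib

open scoped Classical

/-- Probability of an event `p` under the pmf `w` on a finite sample space. -/
noncomputable def pr {Ω : Type*} [Fintype Ω] (w : Ω → ℝ) (p : Ω → Prop) : ℝ :=
  ∑ ω : Ω, if p ω then w ω else 0

/-- Mutual information `I(X;Y)` (terms with zero joint probability vanish since `0 * log _ = 0`). -/
noncomputable def mutualInfo {Ω A B : Type*} [Fintype Ω] [Fintype A] [Fintype B]
    (w : Ω → ℝ) (X : Ω → A) (Y : Ω → B) : ℝ :=
  ∑ a : A, ∑ b : B,
    pr w (fun ω => X ω = a ∧ Y ω = b) *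
      Real.log (pr w (fun ω => X ω = a ∧ Y ω = b) /
        (pr w (fun ω => X ω = a) * pr w (fun ω => Y ω = b)))

/-- Entropy `H(X)` (terms with zero probability vanish since `0 * log 0 = 0`). -/
noncomputable def entropy {Ω A : Type*} [Fintype Ω] [Fintype A]
    (w : Ω → ℝ) (X : Ω → A) : ℝ :=
  -∑ a : A, pr w (fun ω => X ω = a) * Real.log (pr w (fun ω => X ω = a))

lemma pr_congr {Ω : Type*} [Fintype Ω] (w : Ω → ℝ) {p q : Ω → Prop}
    (h : ∀ ω, p ω ↔ q ω) : pr w p = pr w q :=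
  Finset.sum_congr rfl fun ω _ => by simp [h ω]

lemma pr_pos {Ω : Type*} [Fintype Ω] {w : Ω → ℝ} (hw0 : ∀ ω, 0 ≤ w ω)
    {p : Ω → Prop} {ω₀ : Ω} (hp : p ω₀) (hw : 0 < w ω₀) : 0 < pr w p := by
  have h1 : (if p ω₀ then w ω₀ else 0) ≤ pr w p :=
    Finset.single_le_sum (f := fun ω => if p ω then w ω else 0)
      (fun ω _ => by by_cases h : p ω <;> simp [h, hw0 ω]) (Finset.mem_univ ω₀)
  rw [if_pos hp] at h1
  exact hw.trans_le h1

lemma exp_sum {Ω B : Type*} [Fintype Ω] [Fintype B] (w : Ω → ℝ) (Y : Ω → B) (g : B → ℝ) :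
    ∑ b : B, pr w (fun ω => Y ω = b) * g b = ∑ ω : Ω, w ω * g (Y ω) := by
  unfold pr
  simp_rw [Finset.sum_mul]
  rw [Finset.sum_comm]
  refine Finset.sum_congr rfl fun ω _ => ?_
  rw [Finset.sum_eq_single (Y ω)]
  · simp
  · intro b _ hb
    rw [if_neg (Ne.symm hb), zero_mul]
  · simp

lemma entropy_eq {Ω A : Type*} [Fintype Ω] [Fintype A] (w : Ω → ℝ) (X : Ω → A) :
    entropy w X = -∑ ω : Ω, w ω * Real.log (pr w (fun ω' => X ω' = X ω)) := by
  rw [entropy, exp_sum w X (fun a => Real.log (pr w (fun ω => X ω = a)))]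

lemma mutualInfo_eq {Ω A B : Type*} [Fintype Ω] [Fintype A] [Fintype B]
    (w : Ω → ℝ) (X : Ω → A) (Y : Ω → B) :
    mutualInfo w X Y = ∑ ω : Ω, w ω *
      Real.log (pr w (fun ω' => X ω' = X ω ∧ Y ω' = Y ω) /
        (pr w (fun ω' => X ω' = X ω) * pr w (fun ω' => Y ω' = Y ω))) := by
  rw [mutualInfo, ← Finset.sum_product' (f := fun a b =>
    pr w (fun ω => X ω = a ∧ Y ω = b) *
      Real.log (pr w (fun ω => X ω = a ∧ Y ω = b) /
        (pr w (fun ω => X ω = a) * pr w (fun ω => Y ω = b)))), Finset.univ_product_univ]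
  have := exp_sum w (fun ω => (X ω, Y ω)) (fun p =>
    Real.log (pr w (fun ω => X ω = p.1 ∧ Y ω = p.2) /
      (pr w (fun ω => X ω = p.1) * pr w (fun ω => Y ω = p.2))))
  rw [← this]
  refine Finset.sum_congr rfl fun p _ => ?_
  congr 1
  exact pr_congr w fun ω => by simp [Prod.ext_iff]

lemma exp_sum_pi {Ω : Type*} [Fintype Ω] {M : ℕ} {A : Fin M → Type*} [∀ i, Fintype (A i)]
    (w : Ω → ℝ) (X : ∀ i, Ω → A i) (g : (∀ i, A i) → ℝ) :
    ∑ x : ∀ i, A i, pr w (fun ω => ∀ i, X i ω = x i) * g x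
      = ∑ ω : Ω, w ω * g (fun i => X i ω) := by
  rw [← exp_sum w (fun ω i => X i ω) g]
  refine Finset.sum_congr rfl fun x _ => ?_
  congr 1
  exact pr_congr w fun ω => by
    constructor
    · intro h; funext i; exact h i
    · intro h i; exact congrFun h i

/-- Weakly meshed tree approximation: the variables are indexed by `Fin M`
(index `0` plays the role of `X_1` and the last index `⟨M-1,_⟩` plays the role of `X_M`). Node
`M` has the two distinct parents `p₁, p₂` (both among the first `M−1` nodes), while every other
non-root node `i` has the single parent `Θ i` (also among the first `M−1` nodes). For a strictly
positive joint distribution, the KL divergence between the joint distribution and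
`q(x) = P(X_0 = x_0) · ∏_{i ≠ 0, last} P(X_i = x_i ∣ X_{Θ i} = x_{Θ i})
      · P(X_last = x_last ∣ X_{p₁} = x_{p₁}, X_{p₂} = x_{p₂})`
equals `∑_i H(X_i) − H(X_1,…,X_M) − ∑_{i ≠ 0, last} I(X_i ; X_{Θ i}) − I(X_last ; (X_{p₁}, X_{p₂}))`. -/
theorem kl_two_parent_tree_approximation_eq
    {Ω : Type*} [Fintype Ω] (w : Ω → ℝ)
    (hw0 : ∀ ω, 0 ≤ w ω) (hw1 : ∑ ω : Ω, w ω = 1)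
    (M : ℕ) (hM : 3 ≤ M)
    (A : Fin M → Type*) [∀ i, Fintype (A i)]
    (X : ∀ i, Ω → A i)
    (hpos : ∀ x : ∀ i, A i, 0 < pr w (fun ω => ∀ i, X i ω = x i))
    (Θ : Fin M → Fin M) (hΘ : ∀ i, Θ i ≠ ⟨M - 1, by omega⟩)
    (p₁ p₂ : Fin M) (hp₁ : p₁ ≠ ⟨M - 1, by omega⟩) (hp₂ : p₂ ≠ ⟨M - 1, by omega⟩)
    (hp : p₁ ≠ p₂) :
    (∑ x : ∀ i, A i,
        pr w (fun ω => ∀ i, X i ω = x i) *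
          Real.log (pr w (fun ω => ∀ i, X i ω = x i) /
            (pr w (fun ω => X ⟨0, by omega⟩ ω = x ⟨0, by omega⟩) *
              (∏ i ∈ Finset.univ.filter
                  (fun i : Fin M => i ≠ ⟨0, by omega⟩ ∧ i ≠ ⟨M - 1, by omega⟩),
                pr w (fun ω => X i ω = x i ∧ X (Θ i) ω = x (Θ i)) /
                  pr w (fun ω => X (Θ i) ω = x (Θ i))) *
              (pr w (fun ω => X ⟨M - 1, by omega⟩ ω = x ⟨M - 1, by omega⟩ ∧
                    X p₁ ω = x p₁ ∧ X p₂ ω = x p₂) /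
                pr w (fun ω => X p₁ ω = x p₁ ∧ X p₂ ω = x p₂)))))
      = (∑ i : Fin M, entropy w (X i)) - entropy w (fun ω => fun i => X i ω)
          - (∑ i ∈ Finset.univ.filter
                (fun i : Fin M => i ≠ ⟨0, by omega⟩ ∧ i ≠ ⟨M - 1, by omega⟩),
              mutualInfo w (X i) (X (Θ i)))
          - mutualInfo w (X ⟨M - 1, by omega⟩) (fun ω => (X p₁ ω, X p₂ ω)) := by
  classical
  rw [exp_sum_pi w X (fun x =>
          Real.log (pr w (fun ω => ∀ i, X i ω = x i) /
            (pr w (fun ω => X ⟨0, by omega⟩ ω = x ⟨0, by omega⟩) *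
              (∏ i ∈ Finset.univ.filter
                  (fun i : Fin M => i ≠ ⟨0, by omega⟩ ∧ i ≠ ⟨M - 1, by omega⟩),
                pr w (fun ω => X i ω = x i ∧ X (Θ i) ω = x (Θ i)) /
                  pr w (fun ω => X (Θ i) ω = x (Θ i))) *
              (pr w (fun ω => X ⟨M - 1, by omega⟩ ω = x ⟨M - 1, by omega⟩ ∧
                    X p₁ ω = x p₁ ∧ X p₂ ω = x p₂) /
                pr w (fun ω => X p₁ ω = x p₁ ∧ X p₂ ω = x p₂)))))]
  simp only [entropy_eq, mutualInfo_eq]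
  have hswap1 : ∑ i : Fin M, -∑ ω : Ω, w ω * Real.log (pr w fun ω' => X i ω' = X i ω)
      = ∑ ω : Ω, ∑ i : Fin M, -(w ω * Real.log (pr w fun ω' => X i ω' = X i ω)) := by
    simp only [← Finset.sum_neg_distrib]
    exact Finset.sum_comm
  have hswap2 : ∑ i ∈ Finset.univ.filter
        (fun i : Fin M => i ≠ ⟨0, by omega⟩ ∧ i ≠ ⟨M - 1, by omega⟩),
        ∑ ω : Ω, w ω * Real.log ((pr w fun ω' => X i ω' = X i ω ∧ X (Θ i) ω' = X (Θ i) ω) /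
            ((pr w fun ω' => X i ω' = X i ω) * pr w fun ω' => X (Θ i) ω' = X (Θ i) ω))
      = ∑ ω : Ω, ∑ i ∈ Finset.univ.filter
        (fun i : Fin M => i ≠ ⟨0, by omega⟩ ∧ i ≠ ⟨M - 1, by omega⟩),
        w ω * Real.log ((pr w fun ω' => X i ω' = X i ω ∧ X (Θ i) ω' = X (Θ i) ω) /
            ((pr w fun ω' => X i ω' = X i ω) * pr w fun ω' => X (Θ i) ω' = X (Θ i) ω)) :=
    Finset.sum_comm
  rw [hswap1, hswap2, sub_neg_eq_add, ← Finset.sum_add_distrib,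
    ← Finset.sum_sub_distrib, ← Finset.sum_sub_distrib]
  refine Finset.sum_congr rfl fun ω _ => ?_
  have hJ' : (pr w fun ω' => (fun i => X i ω') = fun i => X i ω)
      = pr w (fun ω' => ∀ i, X i ω' = X i ω) :=
    pr_congr w fun ω' => funext_iff
  have hPr' : (pr w fun ω' => (X p₁ ω', X p₂ ω') = (X p₁ ω, X p₂ ω))
      = pr w (fun ω' => X p₁ ω' = X p₁ ω ∧ X p₂ ω' = X p₂ ω) :=
    pr_congr w fun ω' => by simp [Prod.ext_iff]
  have hP3' : (pr w fun ω' => X ⟨M - 1, by omega⟩ ω' = X ⟨M - 1, by omega⟩ ω ∧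
        (X p₁ ω', X p₂ ω') = (X p₁ ω, X p₂ ω))
      = pr w (fun ω' => X ⟨M - 1, by omega⟩ ω' = X ⟨M - 1, by omega⟩ ω ∧
        X p₁ ω' = X p₁ ω ∧ X p₂ ω' = X p₂ ω) :=
    pr_congr w fun ω' => by simp [Prod.ext_iff]
  rw [hJ', hPr', hP3']
  rcases (hw0 ω).eq_or_lt with h | h
  · simp [← h]
  · have hJp : 0 < pr w (fun ω' => ∀ i, X i ω' = X i ω) := pr_pos hw0 (fun i => rfl) h
    have hPp : ∀ j : Fin M, 0 < pr w (fun ω' => X j ω' = X j ω) := fun j => pr_pos hw0 rfl h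
    have hPiθp : ∀ j : Fin M,
        0 < pr w (fun ω' => X j ω' = X j ω ∧ X (Θ j) ω' = X (Θ j) ω) :=
      fun j => pr_pos hw0 ⟨rfl, rfl⟩ h
    have hP3p : 0 < pr w (fun ω' => X ⟨M - 1, by omega⟩ ω' = X ⟨M - 1, by omega⟩ ω ∧
        X p₁ ω' = X p₁ ω ∧ X p₂ ω' = X p₂ ω) := pr_pos hw0 ⟨rfl, rfl, rfl⟩ h
    have hPrp : 0 < pr w (fun ω' => X p₁ ω' = X p₁ ω ∧ X p₂ ω' = X p₂ ω) :=
      pr_pos hw0 ⟨rfl, rfl⟩ h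
    have hPPp : 0 < ∏ i ∈ Finset.univ.filter
        (fun i : Fin M => i ≠ ⟨0, by omega⟩ ∧ i ≠ ⟨M - 1, by omega⟩),
        pr w (fun ω' => X i ω' = X i ω ∧ X (Θ i) ω' = X (Θ i) ω) /
          pr w (fun ω' => X (Θ i) ω' = X (Θ i) ω) :=
      Finset.prod_pos fun i _ => div_pos (hPiθp i) (hPp (Θ i))
    rw [Real.log_div hJp.ne' (mul_pos (mul_pos (hPp ⟨0, by omega⟩) hPPp)
        (div_pos hP3p hPrp)).ne',
      Real.log_mul (mul_pos (hPp ⟨0, by omega⟩) hPPp).ne' (div_pos hP3p hPrp).ne',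
      Real.log_mul (hPp ⟨0, by omega⟩).ne' hPPp.ne',
      Real.log_div hP3p.ne' hPrp.ne',
      Real.log_div hP3p.ne' (mul_pos (hPp ⟨M - 1, by omega⟩) hPrp).ne',
      Real.log_mul (hPp ⟨M - 1, by omega⟩).ne' hPrp.ne']
    have hPP2 : Real.log (∏ i ∈ Finset.univ.filter
          (fun i : Fin M => i ≠ ⟨0, by omega⟩ ∧ i ≠ ⟨M - 1, by omega⟩),
          pr w (fun ω' => X i ω' = X i ω ∧ X (Θ i) ω' = X (Θ i) ω) /
            pr w (fun ω' => X (Θ i) ω' = X (Θ i) ω))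
        = ∑ i ∈ Finset.univ.filter
          (fun i : Fin M => i ≠ ⟨0, by omega⟩ ∧ i ≠ ⟨M - 1, by omega⟩),
          (Real.log (pr w (fun ω' => X i ω' = X i ω ∧ X (Θ i) ω' = X (Θ i) ω)) -
            Real.log (pr w (fun ω' => X (Θ i) ω' = X (Θ i) ω))) := by
      rw [Real.log_prod fun i _ => (div_pos (hPiθp i) (hPp (Θ i))).ne']
      exact Finset.sum_congr rfl fun i _ => Real.log_div (hPiθp i).ne' (hPp (Θ i)).ne'
    have hMI : (∑ i ∈ Finset.univ.filter
          (fun i : Fin M => i ≠ ⟨0, by omega⟩ ∧ i ≠ ⟨M - 1, by omega⟩),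
          w ω * Real.log ((pr w fun ω' => X i ω' = X i ω ∧ X (Θ i) ω' = X (Θ i) ω) /
            ((pr w fun ω' => X i ω' = X i ω) * pr w fun ω' => X (Θ i) ω' = X (Θ i) ω)))
        = ∑ i ∈ Finset.univ.filter
          (fun i : Fin M => i ≠ ⟨0, by omega⟩ ∧ i ≠ ⟨M - 1, by omega⟩),
          w ω * (Real.log (pr w (fun ω' => X i ω' = X i ω ∧ X (Θ i) ω' = X (Θ i) ω)) -
            Real.log (pr w (fun ω' => X i ω' = X i ω)) -
            Real.log (pr w (fun ω' => X (Θ i) ω' = X (Θ i) ω))) :=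
      Finset.sum_congr rfl fun i _ => by
        rw [Real.log_div (hPiθp i).ne' (mul_pos (hPp i) (hPp (Θ i))).ne',
          Real.log_mul (hPp i).ne' (hPp (Θ i)).ne']
        ring
    rw [hPP2, hMI]
    have hzl : (⟨0, by omega⟩ : Fin M) ≠ ⟨M - 1, by omega⟩ := by
      simp only [ne_eq, Fin.mk.injEq]
      omega
    have huniv : (Finset.univ : Finset (Fin M)) = insert ⟨0, by omega⟩
        (insert ⟨M - 1, by omega⟩ (Finset.univ.filter
          (fun i : Fin M => i ≠ ⟨0, by omega⟩ ∧ i ≠ ⟨M - 1, by omega⟩))) := by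
      ext i
      simp only [Finset.mem_univ, Finset.mem_insert, Finset.mem_filter, true_and, true_iff]
      rcases eq_or_ne i ⟨0, by omega⟩ with h0 | h0
      · exact Or.inl h0
      rcases eq_or_ne i ⟨M - 1, by omega⟩ with h1 | h1
      · exact Or.inr (Or.inl h1)
      exact Or.inr (Or.inr ⟨h0, h1⟩)
    have hz_not : (⟨0, by omega⟩ : Fin M) ∉ insert (⟨M - 1, by omega⟩ : Fin M)
        (Finset.univ.filter
          (fun i : Fin M => i ≠ ⟨0, by omega⟩ ∧ i ≠ ⟨M - 1, by omega⟩)) := by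
      simp [hzl]
    have hl_not : (⟨M - 1, by omega⟩ : Fin M) ∉ Finset.univ.filter
          (fun i : Fin M => i ≠ ⟨0, by omega⟩ ∧ i ≠ ⟨M - 1, by omega⟩) := by
      simp
    have hsplit : (∑ i : Fin M, -(w ω * Real.log (pr w fun ω' => X i ω' = X i ω)))
        = -(w ω * Real.log (pr w fun ω' => X ⟨0, by omega⟩ ω' = X ⟨0, by omega⟩ ω))
          + (-(w ω * Real.log (pr w fun ω' =>
              X ⟨M - 1, by omega⟩ ω' = X ⟨M - 1, by omega⟩ ω))
            + ∑ i ∈ Finset.univ.filter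
                (fun i : Fin M => i ≠ ⟨0, by omega⟩ ∧ i ≠ ⟨M - 1, by omega⟩),
              -(w ω * Real.log (pr w fun ω' => X i ω' = X i ω))) := by
      conv_lhs => rw [huniv]
      rw [Finset.sum_insert hz_not, Finset.sum_insert hl_not]
    rw [hsplit]
    have hrel : w ω * (∑ i ∈ Finset.univ.filter
          (fun i : Fin M => i ≠ ⟨0, by omega⟩ ∧ i ≠ ⟨M - 1, by omega⟩),
          (Real.log (pr w (fun ω' => X i ω' = X i ω ∧ X (Θ i) ω' = X (Θ i) ω)) -
            Real.log (pr w (fun ω' => X (Θ i) ω' = X (Θ i) ω))))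
        = (∑ i ∈ Finset.univ.filter
          (fun i : Fin M => i ≠ ⟨0, by omega⟩ ∧ i ≠ ⟨M - 1, by omega⟩),
          w ω * (Real.log (pr w (fun ω' => X i ω' = X i ω ∧ X (Θ i) ω' = X (Θ i) ω)) -
            Real.log (pr w (fun ω' => X i ω' = X i ω)) -
            Real.log (pr w (fun ω' => X (Θ i) ω' = X (Θ i) ω))))
          - (∑ i ∈ Finset.univ.filter
          (fun i : Fin M => i ≠ ⟨0, by omega⟩ ∧ i ≠ ⟨M - 1, by omega⟩),
          -(w ω * Real.log (pr w (fun ω' => X i ω' = X i ω)))) := by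
      rw [Finset.mul_sum, ← Finset.sum_sub_distrib]
      exact Finset.sum_congr rfl fun i _ => by ring
    linear_combination -hrel
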